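/- A topologically finitely generated profinite group G is projective if and only if there exists a continuous idempotent endomorphism ψ of a free profinite group F of finite rank such that G is isomorphic (as topological group) to the image of ψ. -/

import Mathlib

set_option linter.unusedSectionVars false
set_option linter.unusedVariables false


/-- A profinite group is projective when every continuous homomorphism to a profinite
group lifts along any continuous surjection of profinite groups. -/
def IsProjectiveProfinite (G : Type) [Group G] [TopologicalSpace G] : Prop :=
  ∀ (H K : Type) [Group H] [TopologicalSpace H] [IsTopologicalGroup H] [CompactSpace H]
    [TotallyDisconnectedSpace H] [T2Space H]
    [Group K] [TopologicalSpace K] [IsTopologicalGroup K] [CompactSpace K]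
    [TotallyDisconnectedSpace K] [T2Space K]
    (φ : G →* H) (ψ : K →* H), Continuous φ → Continuous ψ → Function.Surjective ψ →
      ∃ φ' : G →* K, Continuous φ' ∧ ψ.comp φ' = φ

/-- `F` is a free profinite group on the finite family `ι : Fin n → F`: every map from
`Fin n` to a profinite group extends uniquely to a continuous homomorphism. -/
def IsFreeProfiniteOn {n : ℕ} (F : Type) [Group F] [TopologicalSpace F]
    (ι : Fin n → F) : Prop :=
  ∀ (H : Type) [Group H] [TopologicalSpace H] [IsTopologicalGroup H] [CompactSpace H]
    [TotallyDisconnectedSpace H] [T2Space H] (f : Fin n → H),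
      ∃! φ : F →* H, Continuous φ ∧ ∀ i, φ (ι i) = f i


section Aux

open IsTopologicalGroup


-- nbhd basis of open normal subgroups in a profinite group
theorem exists_ons {H : Type} [Group H] [TopologicalSpace H] [IsTopologicalGroup H]
    [CompactSpace H] [TotallyDisconnectedSpace H] [T2Space H] {V : Set H}
    (hV : V ∈ nhds (1 : H)) : ∃ U : OpenNormalSubgroup H, (U : Set H) ⊆ V := by
  obtain ⟨W, hW, h1W, hWV⟩ := isTopologicalBasis_isClopen.mem_nhds_iff.mp hV
  obtain ⟨U, hU⟩ := exist_openNormalSubgroup_sub_clopen_nhds_of_one hW h1W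
  exact ⟨U, hU.trans hWV⟩

theorem sep_ons {H : Type} [Group H] [TopologicalSpace H] [IsTopologicalGroup H]
    [CompactSpace H] [TotallyDisconnectedSpace H] [T2Space H] {x : H} (hx : x ≠ 1) :
    ∃ U : OpenNormalSubgroup H, x ∉ (U : Set H) := by
  obtain ⟨U, hU⟩ := exists_ons (V := {x}ᶜ) (by
    exact IsOpen.mem_nhds isOpen_compl_singleton (by simpa using hx.symm))
  exact ⟨U, fun h => hU h rfl⟩


variable (n : ℕ)

abbrev Gam := FreeGroup (Fin n)

abbrev In := {N : Subgroup (Gam n) // N.Normal ∧ N.FiniteIndex}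

instance (N : In n) : N.1.Normal := N.2.1
instance (N : In n) : N.1.FiniteIndex := N.2.2
instance (N : In n) : TopologicalSpace (Gam n ⧸ N.1) := ⊥
instance (N : In n) : DiscreteTopology (Gam n ⧸ N.1) := ⟨rfl⟩
instance (N : In n) : IsTopologicalGroup (Gam n ⧸ N.1) := ⟨⟩

abbrev Pn := ∀ N : In n, Gam n ⧸ N.1

noncomputable def dmap : Gam n →* Pn n := Pi.monoidHom (fun N => QuotientGroup.mk' N.1)

noncomputable def Dn : Subgroup (Pn n) := (dmap n).range.topologicalClosure

abbrev Fn := ↥(Dn n)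

instance : CompactSpace (Fn n) :=
  isCompact_iff_compactSpace.mp (Subgroup.isClosed_topologicalClosure _).isCompact

-- check other instances are found
example : IsTopologicalGroup (Fn n) := inferInstance
example : T2Space (Fn n) := inferInstance
example : TotallyDisconnectedSpace (Fn n) := inferInstance
example : TotallyDisconnectedSpace (Pn n) := inferInstance
example : CompactSpace (Pn n) := inferInstance

noncomputable def iot : Fin n → Fn n := fun i =>
  ⟨dmap n (FreeGroup.of i), Subgroup.le_topologicalClosure _ ⟨FreeGroup.of i, rfl⟩⟩

section UP
variable {H : Type} [Group H] [TopologicalSpace H] [IsTopologicalGroup H]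
  [CompactSpace H] [TotallyDisconnectedSpace H] [T2Space H] (f : Fin n → H)

noncomputable def ph0 : Gam n →* H := FreeGroup.lift f

noncomputable def NU (U : OpenNormalSubgroup H) : In n :=
  ⟨U.toSubgroup.comap (ph0 n f), by
    constructor
    · exact Subgroup.Normal.comap U.isNormal' _
    · have : Finite (Gam n ⧸ U.toSubgroup.comap (ph0 n f)) := by
        have hfin : Finite (H ⧸ U.toSubgroup) :=
          U.toSubgroup.quotient_finite_of_isOpen U.isOpen
        set g := (QuotientGroup.mk' U.toSubgroup).comp (ph0 n f) with hg
        have hker : ∀ x ∈ U.toSubgroup.comap (ph0 n f), g x = 1 := by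
          intro x hx
          simpa [g, QuotientGroup.eq_one_iff] using hx
        have hinj : Function.Injective
            (QuotientGroup.lift (U.toSubgroup.comap (ph0 n f)) g hker) := by
          rw [← MonoidHom.ker_eq_bot_iff, eq_bot_iff]
          intro a ha
          induction a using QuotientGroup.induction_on with
          | H x =>
            simp only [g, MonoidHom.comp_apply, QuotientGroup.mk'_apply,
              QuotientGroup.eq_one_iff] at ha
            exact (by have ha' : g x = 1 := ha; simpa [g, QuotientGroup.eq_one_iff] using ha')
        exact Finite.of_injective _ hinj
      exact Subgroup.finiteIndex_of_finite_quotient⟩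

noncomputable def jmap : Gam n →* Pn n × H := (dmap n).prod (ph0 n f)

noncomputable def Rn : Subgroup (Pn n × H) := (jmap n f).range.topologicalClosure

noncomputable def thU (U : OpenNormalSubgroup H) :
    Gam n ⧸ (NU n f U).1 →* H ⧸ U.toSubgroup :=
  QuotientGroup.lift (NU n f U).1 ((QuotientGroup.mk' U.toSubgroup).comp (ph0 n f))
    (fun x hx => by simpa [NU, QuotientGroup.eq_one_iff] using hx)

theorem compat (U : OpenNormalSubgroup H) :
    ∀ x ∈ Rn n f, thU n f U (x.1 (NU n f U)) = QuotientGroup.mk x.2 := by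
  haveI : DiscreteTopology (H ⧸ U.toSubgroup) :=
    QuotientGroup.discreteTopology U.isOpen
  have hclosed : IsClosed {x : Pn n × H |
      thU n f U (x.1 (NU n f U)) = QuotientGroup.mk x.2} := by
    apply isClosed_eq
    · exact continuous_of_discreteTopology.comp
        ((continuous_apply (NU n f U)).comp continuous_fst)
    · exact continuous_quot_mk.comp continuous_snd
  have hsub : ((jmap n f).range : Set (Pn n × H)) ⊆
      {x : Pn n × H | thU n f U (x.1 (NU n f U)) = QuotientGroup.mk x.2} := by
    rintro _ ⟨γ, rfl⟩
    show thU n f U (QuotientGroup.mk γ) = QuotientGroup.mk (ph0 n f γ)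
    simp [thU]
  intro x hx
  exact closure_minimal hsub hclosed hx

theorem snd_eq_one {h : H} (hh : ((1 : Pn n), h) ∈ Rn n f) : h = 1 := by
  by_contra hne
  obtain ⟨U, hU⟩ := sep_ons hne
  have := compat n f U _ hh
  simp only [Pi.one_apply, map_one] at this
  exact hU ((QuotientGroup.eq_one_iff h).mp this.symm)

instance : CompactSpace (Rn n f) :=
  isCompact_iff_compactSpace.mp (Subgroup.isClosed_topologicalClosure _).isCompact

noncomputable def pmap : Rn n f →* Pn n := (MonoidHom.fst _ _).comp (Rn n f).subtype

theorem pmap_cont : Continuous (pmap n f) := continuous_fst.comp continuous_subtype_val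

theorem pmap_inj : Function.Injective (pmap n f) := by
  intro a b hab
  have hmem : ((1 : Pn n), (a : Pn n × H).2 * ((b : Pn n × H).2)⁻¹) ∈ Rn n f := by
    have h := (a * b⁻¹).2
    have h1 : ((a * b⁻¹ : Rn n f) : Pn n × H).1 = 1 := by
      have : (a : Pn n × H).1 = (b : Pn n × H).1 := hab
      simp [this]
    have : ((a * b⁻¹ : Rn n f) : Pn n × H) =
        ((1 : Pn n), (a : Pn n × H).2 * ((b : Pn n × H).2)⁻¹) := by
      ext
      · rw [h1]
      · rfl
    rwa [this] at h
  have h2 := snd_eq_one n f hmem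
  have : (a : Pn n × H).2 = (b : Pn n × H).2 := by
    have := mul_inv_eq_one.mp h2
    exact this
  apply Subtype.ext
  exact Prod.ext hab this

theorem pmap_mem (x : Rn n f) : pmap n f x ∈ Dn n := by
  have hx : (x : Pn n × H) ∈ closure ((jmap n f).range : Set (Pn n × H)) := x.2
  have : pmap n f x ∈ closure (Prod.fst '' ((jmap n f).range : Set (Pn n × H))) :=
    (image_closure_subset_closure_image continuous_fst) ⟨_, hx, rfl⟩
  apply closure_mono _ this
  rintro _ ⟨_, ⟨γ, rfl⟩, rfl⟩
  exact ⟨γ, rfl⟩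

noncomputable def pres : Rn n f →* Fn n := (pmap n f).codRestrict (Dn n) (pmap_mem n f)

theorem pres_surj : Function.Surjective (pres n f) := by
  have hcl : IsClosed (Set.range (pres n f)) :=
    (isCompact_range (Continuous.subtype_mk (pmap_cont n f) _)).isClosed
  intro y
  have hy : (y : Pn n) ∈ closure ((dmap n).range : Set (Pn n)) := y.2
  have hsub : ((dmap n).range : Set (Pn n)) ⊆ Subtype.val '' Set.range (pres n f) := by
    rintro _ ⟨γ, rfl⟩
    exact ⟨pres n f ⟨jmap n f γ, Subgroup.le_topologicalClosure _ ⟨γ, rfl⟩⟩, ⟨_, rfl⟩, rfl⟩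
  have hcl2 : IsClosed (Subtype.val '' Set.range (pres n f)) := by
    apply IsCompact.isClosed
    exact ((isCompact_range (Continuous.subtype_mk (pmap_cont n f) _)).image
      continuous_subtype_val)
  have := closure_minimal hsub hcl2 hy
  obtain ⟨z, hz, hzy⟩ := this
  obtain ⟨r, rfl⟩ := hz
  exact ⟨r, Subtype.ext hzy⟩

noncomputable def req : Rn n f ≃* Fn n :=
  MulEquiv.ofBijective (pres n f)
    ⟨fun a b h => pmap_inj n f (congrArg Subtype.val h), pres_surj n f⟩

theorem req_cont : Continuous (req n f) := Continuous.subtype_mk (pmap_cont n f) _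

noncomputable def Phi : Fn n →* H :=
  ((MonoidHom.snd _ _).comp (Rn n f).subtype).comp (req n f).symm.toMonoidHom

theorem Phi_cont : Continuous (Phi n f) := by
  have h1 : Continuous ((req n f).symm : Fn n → Rn n f) := by
    have := (Continuous.homeoOfEquivCompactToT2 (f := (req n f).toEquiv) (req_cont n f)).symm.continuous
    exact this
  exact (continuous_snd.comp continuous_subtype_val).comp h1

theorem Phi_iot (i : Fin n) : Phi n f (iot n i) = f i := by
  have hr : req n f ⟨jmap n f (FreeGroup.of i),
      Subgroup.le_topologicalClosure _ ⟨FreeGroup.of i, rfl⟩⟩ = iot n i := by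
    apply Subtype.ext
    rfl
  have := (req n f).symm_apply_apply ⟨jmap n f (FreeGroup.of i),
      Subgroup.le_topologicalClosure _ ⟨FreeGroup.of i, rfl⟩⟩
  rw [hr] at this
  show ((MonoidHom.snd _ _).comp (Rn n f).subtype) ((req n f).symm (iot n i)) = f i
  rw [this]
  show (jmap n f (FreeGroup.of i)).2 = f i
  simp [jmap, ph0]

noncomputable def dF : Gam n →* Fn n :=
  (dmap n).codRestrict (Dn n) (fun γ => Subgroup.le_topologicalClosure _ ⟨γ, rfl⟩)

theorem dF_dense : Dense (Set.range (dF n)) := by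
  rw [dense_iff_closure_eq]
  have hemb := Topology.IsEmbedding.subtypeVal (p := fun x => x ∈ Dn n)
  rw [hemb.closure_eq_preimage_closure_image]
  have himg : Subtype.val '' Set.range (dF n) = ((dmap n).range : Set (Pn n)) := by
    ext x
    constructor
    · rintro ⟨_, ⟨γ, rfl⟩, rfl⟩; exact ⟨γ, rfl⟩
    · rintro ⟨γ, rfl⟩; exact ⟨dF n γ, ⟨γ, rfl⟩, rfl⟩
  rw [himg]
  ext x
  simp only [Set.mem_preimage, Set.mem_univ, iff_true]
  exact x.2

theorem hom_unique {ψ' : Fn n →* H} (hc : Continuous ψ') (hi : ∀ i, ψ' (iot n i) = f i) :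
    ψ' = Phi n f := by
  have hcomp : ψ'.comp (dF n) = (Phi n f).comp (dF n) := by
    apply FreeGroup.ext_hom
    intro i
    have : dF n (FreeGroup.of i) = iot n i := Subtype.ext rfl
    simp only [MonoidHom.comp_apply, this, hi, Phi_iot]
  have heq : Set.EqOn ψ' (Phi n f) (Set.range (dF n)) := by
    rintro _ ⟨γ, rfl⟩
    exact DFunLike.congr_fun hcomp γ
  exact MonoidHom.ext (fun x => congrFun (Continuous.ext_on (dF_dense n) hc (Phi_cont n f) heq) x)

end UP

theorem Fn_free : IsFreeProfiniteOn (Fn n) (iot n) := by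
  intro H _ _ _ _ _ _ f
  exact ⟨Phi n f, ⟨Phi_cont n f, Phi_iot n f⟩, fun ψ' h => hom_unique n f h.1 h.2⟩

end Aux

theorem stmt_12 (G : Type) [Group G] [TopologicalSpace G] [IsTopologicalGroup G]
    [CompactSpace G] [TotallyDisconnectedSpace G] [T2Space G]
    (hfg : ∃ S : Set G, S.Finite ∧ (Subgroup.closure S).topologicalClosure = ⊤) :
    IsProjectiveProfinite G ↔
      ∃ (n : ℕ) (F : Type) (_ : Group F) (_ : TopologicalSpace F),
        IsTopologicalGroup F ∧ CompactSpace F ∧ TotallyDisconnectedSpace F ∧ T2Space F ∧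
        ∃ (ι : Fin n → F) (ψ : F →* F),
          IsFreeProfiniteOn F ι ∧ Continuous ψ ∧ ψ.comp ψ = ψ ∧
          ∃ e : G ≃* MonoidHom.range ψ, Continuous e ∧ Continuous e.symm := by
  constructor
  · intro hproj
    obtain ⟨S, hSfin, hScl⟩ := hfg
    classical
    let n := hSfin.toFinset.card
    let eq := hSfin.toFinset.equivFin
    let g : Fin n → G := fun i => (eq.symm i : G)
    refine ⟨n, Fn n, inferInstance, inferInstance, inferInstance, inferInstance,
      inferInstance, inferInstance, iot n, ?_⟩
    -- surjection π : Fn n → G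
    let π : Fn n →* G := Phi n g
    have hπc : Continuous π := Phi_cont n g
    have hπi : ∀ i, π (iot n i) = g i := Phi_iot n g
    have hπsurj : Function.Surjective π := by
      rw [← MonoidHom.range_eq_top]
      have hclosed : IsClosed (π.range : Set G) := (isCompact_range hπc).isClosed
      have hle : (Subgroup.closure S).topologicalClosure ≤ π.range := by
        apply Subgroup.topologicalClosure_minimal _ _ hclosed
        rw [Subgroup.closure_le]
        intro s hs
        refine ⟨iot n (eq ⟨s, hSfin.mem_toFinset.mpr hs⟩), ?_⟩
        rw [hπi]
        simp [g]
      rw [hScl] at hle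
      exact top_le_iff.mp hle
    obtain ⟨σ, hσc, hσ⟩ := hproj G (Fn n) (MonoidHom.id G) π continuous_id hπc hπsurj
    have hπσ : ∀ x, π (σ x) = x := fun x => DFunLike.congr_fun hσ x
    refine ⟨σ.comp π, Fn_free n, hσc.comp hπc, ?_, ?_⟩
    · ext x
      simp [hπσ]
    · refine ⟨⟨⟨fun x => ⟨σ x, σ x, by simp [hπσ]⟩, fun y => π y.1, ?_, ?_⟩, ?_⟩, ?_, ?_⟩
      · intro x
        simp [hπσ]
      · rintro ⟨y, z, hz⟩
        apply Subtype.ext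
        simp only [← hz]
        simp [hπσ]
      · intro x y
        apply Subtype.ext
        simp
      · exact Continuous.subtype_mk hσc _
      · exact hπc.comp continuous_subtype_val
  · rintro ⟨n, F, iG, iT, hTG, hCS, hTD, hT2, ι, ψF, hfree, hψc, hψψ, e, hec, hesc⟩
    intro H K _ _ _ _ _ _ _ _ _ _ _ _ φ ψK hφc hψKc hsurj
    have hfix : ∀ y : F, y ∈ ψF.range → ψF y = y := by
      rintro _ ⟨z, rfl⟩
      exact DFunLike.congr_fun hψψ z
    let Φ : F →* H := φ.comp ((e.symm.toMonoidHom).comp ψF.rangeRestrict)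
    have hΦc : Continuous Φ := hφc.comp (hesc.comp (Continuous.subtype_mk hψc _))
    choose k hk using fun i => hsurj (Φ (ι i))
    obtain ⟨Φ', ⟨hΦ'c, hΦ'i⟩, -⟩ := hfree K k
    have hcomp : ψK.comp Φ' = Φ := by
      obtain ⟨u, -, huniq⟩ := hfree H (fun i => Φ (ι i))
      have h1 := huniq (ψK.comp Φ') ⟨hψKc.comp hΦ'c, fun i => by simp [hΦ'i, hk]⟩
      have h2 := huniq Φ ⟨hΦc, fun i => rfl⟩
      rw [h1, h2]
    refine ⟨Φ'.comp ((ψF.range.subtype).comp e.toMonoidHom),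
      hΦ'c.comp (continuous_subtype_val.comp hec), ?_⟩
    ext x
    have h3 : ψF.rangeRestrict ((e x : F)) = e x :=
      Subtype.ext (hfix _ (e x).2)
    simp only [MonoidHom.comp_apply, Subgroup.coe_subtype, MulEquiv.coe_toMonoidHom]
    rw [← MonoidHom.comp_apply ψK Φ', hcomp]
    simp [Φ, h3]
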